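/- arXiv:2503.05329 — 5 statements merged into one kernel-verified Lean document; each statement's English description precedes it below -/
import Mathlib

section
/- With the recursive definitions d(n) and r_n as above (d(1) least k with k/(k+2) > r; d(n) least k with k/(k+1+2^(dn−d)) > r/r_{n−1}; r_n = ∏_{j=1}^n d(j)/(d(j)+1+2^(dj−d))), the sequence (r_n) satisfies 1 > r_n ≥ r_{n+1} > r for all n ∈ ℕ. -/
open Filter Topology

/-- with the recursive definitions `d(n)` (least `k` with
`k/(k+1+2^(dn−d)) > r/r_{n−1}`, `r_0 = 1`) and
`r_n = ∏_{j=1}^n d(j)/(d(j)+1+2^(dj−d))`, we have `1 > r_n ≥ r_{n+1} > r` for all `n ≥ 1`. -/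
theorem r_seq_decreasing (r : ℝ) (hr0 : 0 < r) (hr1 : r < 1) (d : ℕ) (hd : 1 ≤ d)
    (D : ℕ → ℕ) (R : ℕ → ℝ) (hR0 : R 0 = 1)
    (hRprod : ∀ n, 1 ≤ n →
      R n = ∏ j ∈ Finset.Icc 1 n, (D j : ℝ) / ((D j : ℝ) + 1 + 2 ^ (d * j - d)))
    (hleast : ∀ n, 1 ≤ n →
      IsLeast {k : ℕ | r / R (n - 1) < (k : ℝ) / ((k : ℝ) + 1 + 2 ^ (d * n - d))} (D n)) :
    ∀ n, 1 ≤ n → R n < 1 ∧ R (n + 1) ≤ R n ∧ r < R (n + 1) ∧ r < R n := by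
  -- step relation
  have key : ∀ m : ℕ, R (m + 1) =
      R m * ((D (m+1) : ℝ) / ((D (m+1) : ℝ) + 1 + 2 ^ (d * (m+1) - d))) := by
    intro m
    rw [hRprod (m+1) (by omega), Finset.prod_Icc_succ_top (by omega)]
    congr 1
    rcases Nat.eq_zero_or_pos m with h | h
    · subst h; simp [hR0]
    · exact (hRprod m h).symm
  have H : ∀ n : ℕ, r < R n ∧ R n ≤ 1 ∧ (1 ≤ n → R n < R (n - 1)) := by
    intro n
    induction n with
    | zero => refine ⟨by rw [hR0]; exact hr1, by rw [hR0], by omega⟩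
    | succ m ih =>
      obtain ⟨hrR, hR1, _⟩ := ih
      have hRpos : 0 < R m := lt_trans hr0 hrR
      have hmem := (hleast (m+1) (by omega)).1
      simp only [Set.mem_setOf_eq, Nat.add_sub_cancel] at hmem
      set q : ℝ := (D (m+1) : ℝ) / ((D (m+1) : ℝ) + 1 + 2 ^ (d * (m+1) - d)) with hq
      have hden : (0:ℝ) < (D (m+1) : ℝ) + 1 + 2 ^ (d * (m+1) - d) := by
        positivity
      have hql : q < 1 := by
        rw [hq, div_lt_one hden]
        have : (0:ℝ) < 2 ^ (d * (m+1) - d) := by positivity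
        linarith
      have hrlt : r < R (m+1) := by
        rw [key m]
        have := (div_lt_iff₀ hRpos).mp hmem
        calc r < q * R m := this
          _ = R m * q := mul_comm _ _
      have hlt : R (m+1) < R m := by
        rw [key m]
        calc R m * q < R m * 1 := by exact mul_lt_mul_of_pos_left hql hRpos
          _ = R m := mul_one _
      exact ⟨hrlt, le_trans hlt.le hR1, fun _ => by simpa using hlt⟩
  intro n hn
  obtain ⟨h1, h2, h3⟩ := H n
  obtain ⟨h1', h2', h3'⟩ := H (n+1)
  refine ⟨lt_of_lt_of_le (h3 hn) ?_, le_of_lt (by simpa using h3' (by omega)), h1', h1⟩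
  exact (H (n-1)).2.1
end

section
/- With the recursive definitions d(n) and r_n as above, the sequence d(n) is nondecreasing: d(n) ≤ d(n+1) for all n ∈ ℕ. -/
open Filter Topology

/-- with the recursive definitions `d(n)` and `r_n` as in the paper's
Lemma 2.4, the sequence `d(n)` is nondecreasing: `d(n) ≤ d(n+1)` for all `n ≥ 1`. -/
theorem d_seq_monotone (r : ℝ) (hr0 : 0 < r) (hr1 : r < 1) (d : ℕ) (hd : 1 ≤ d)
    (D : ℕ → ℕ) (R : ℕ → ℝ) (hR0 : R 0 = 1)
    (hRprod : ∀ n, 1 ≤ n →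
      R n = ∏ j ∈ Finset.Icc 1 n, (D j : ℝ) / ((D j : ℝ) + 1 + 2 ^ (d * j - d)))
    (hleast : ∀ n, 1 ≤ n →
      IsLeast {k : ℕ | r / R (n - 1) < (k : ℝ) / ((k : ℝ) + 1 + 2 ^ (d * n - d))} (D n)) :
    ∀ n, 1 ≤ n → D n ≤ D (n + 1) := by
  set f : ℕ → ℝ := fun j => (D j : ℝ) / ((D j : ℝ) + 1 + 2 ^ (d * j - d)) with hf
  have hprodR : ∀ n : ℕ, (∏ j ∈ Finset.Icc 1 n, f j) = R n := by
    intro n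
    match n with
    | 0 => simp [hR0]
    | (m + 1) => exact (hRprod (m + 1) (by omega)).symm
  have hstep : ∀ n : ℕ, R (n + 1) = R n * f (n + 1) := by
    intro n
    rw [hRprod (n + 1) (by omega), Finset.prod_Icc_succ_top (by omega : 1 ≤ n + 1),
      hprodR]
  have hdenpos : ∀ (k : ℕ) (e : ℕ), (0 : ℝ) < (k : ℝ) + 1 + 2 ^ e := by
    intro k e
    positivity
  have hRpos : ∀ n, 0 < R n := by
    intro n
    induction n with
    | zero => rw [hR0]; exact one_pos
    | succ m ih =>
      have hmem := (hleast (m + 1) (by omega)).1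
      simp only [Set.mem_setOf_eq, Nat.add_sub_cancel] at hmem
      have hDpos : (0 : ℝ) < (D (m + 1) : ℝ) := by
        by_contra h
        push_neg at h
        have h0 : (D (m + 1) : ℝ) = 0 := le_antisymm h (Nat.cast_nonneg _)
        rw [h0, zero_div] at hmem
        exact absurd hmem (not_lt.2 (le_of_lt (div_pos hr0 ih)))
      rw [hstep m]
      exact mul_pos ih (div_pos hDpos (hdenpos _ _))
  have hRdec : ∀ n : ℕ, R (n + 1) ≤ R n := by
    intro n
    rw [hstep n]
    have hfle : f (n + 1) ≤ 1 := by
      apply div_le_one_of_le₀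
      · have : (0:ℝ) < 2 ^ (d * (n + 1) - d) := by positivity
        linarith
      · exact le_of_lt (hdenpos _ _)
    calc R n * f (n + 1) ≤ R n * 1 := by
          exact mul_le_mul_of_nonneg_left hfle (le_of_lt (hRpos n))
      _ = R n := mul_one _
  intro n hn
  have hleastn := hleast n hn
  have hmem1 := (hleast (n + 1) (by omega)).1
  simp only [Set.mem_setOf_eq, Nat.add_sub_cancel] at hmem1
  -- D (n+1) > 0
  have hDpos : (0 : ℝ) < (D (n + 1) : ℝ) := by
    by_contra h
    push_neg at h
    have h0 : (D (n + 1) : ℝ) = 0 := le_antisymm h (Nat.cast_nonneg _)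
    rw [h0, zero_div] at hmem1
    exact absurd hmem1 (not_lt.2 (le_of_lt (div_pos hr0 (hRpos n))))
  -- r / R (n-1) ≤ r / R n
  have h1 : r / R (n - 1) ≤ r / R n := by
    have hle : R n ≤ R (n - 1) := by
      have : R ((n - 1) + 1) ≤ R (n - 1) := hRdec (n - 1)
      have hn1 : (n - 1) + 1 = n := by omega
      rwa [hn1] at this
    exact div_le_div_of_nonneg_left (le_of_lt hr0) (hRpos n) hle
  -- the fraction with the bigger exponent is smaller
  have h2 : (D (n + 1) : ℝ) / ((D (n + 1) : ℝ) + 1 + 2 ^ (d * (n + 1) - d)) ≤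
      (D (n + 1) : ℝ) / ((D (n + 1) : ℝ) + 1 + 2 ^ (d * n - d)) := by
    apply div_le_div_of_nonneg_left (le_of_lt hDpos) (hdenpos _ _)
    have hexp : d * n - d ≤ d * (n + 1) - d := by
      have : d * n ≤ d * (n + 1) := Nat.mul_le_mul_left d (by omega)
      omega
    have : (2 : ℝ) ^ (d * n - d) ≤ 2 ^ (d * (n + 1) - d) :=
      pow_le_pow_right₀ one_le_two hexp
    linarith
  have hfinal : r / R (n - 1) < (D (n + 1) : ℝ) / ((D (n + 1) : ℝ) + 1 + 2 ^ (d * n - d)) :=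
    lt_of_le_of_lt h1 (lt_of_lt_of_le hmem1 h2)
  exact hleastn.2 hfinal
end

section
/- With the recursive definitions d(n) and r_n as above (for 0 < r < 1, d ≥ 1), the decreasing sequence r_n converges to r; equivalently, ∏_{n=1}^∞ d(n)/(d(n) + 1 + 2^(dn−d)) = r. -/
open Filter Topology

/-- with the recursive definitions `d(n)` and `r_n` as in Lemma 2.4 of the
paper, the decreasing sequence `r_n` converges to `r`; that is,
`∏_{n=1}^∞ d(n)/(d(n)+1+2^(dn−d)) = r`. -/
theorem r_seq_tendsto (r : ℝ) (hr0 : 0 < r) (hr1 : r < 1) (d : ℕ) (hd : 1 ≤ d)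
    (D : ℕ → ℕ) (R : ℕ → ℝ) (hR0 : R 0 = 1)
    (hRprod : ∀ n, 1 ≤ n →
      R n = ∏ j ∈ Finset.Icc 1 n, (D j : ℝ) / ((D j : ℝ) + 1 + 2 ^ (d * j - d)))
    (hleast : ∀ n, 1 ≤ n →
      IsLeast {k : ℕ | r / R (n - 1) < (k : ℝ) / ((k : ℝ) + 1 + 2 ^ (d * n - d))} (D n)) :
    Tendsto R atTop (nhds r) ∧
      Tendsto (fun N => ∏ j ∈ Finset.Icc 1 N, (D j : ℝ) / ((D j : ℝ) + 1 + 2 ^ (d * j - d)))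
        atTop (nhds r) := by
  have hE1 : ∀ n : ℕ, (1:ℝ) ≤ 2 ^ (d * n - d) := fun n => one_le_pow₀ (by norm_num)
  have hdenom : ∀ n : ℕ, (0:ℝ) < (D n : ℝ) + 1 + 2 ^ (d * n - d) := by
    intro n; have := hE1 n
    have : (0:ℝ) ≤ (D n : ℝ) := Nat.cast_nonneg _
    have := hE1 n
    linarith
  have hRn : ∀ n, R n = ∏ j ∈ Finset.Icc 1 n,
      (D j : ℝ) / ((D j : ℝ) + 1 + 2 ^ (d * j - d)) := by
    intro n
    rcases Nat.eq_zero_or_pos n with h | h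
    · subst h; simp [hR0]
    · exact hRprod n h
  have hRrec : ∀ m : ℕ, R (m+1)
      = R m * ((D (m+1) : ℝ) / ((D (m+1) : ℝ) + 1 + 2 ^ (d * (m+1) - d))) := by
    intro m
    rw [hRn (m+1), hRn m, Finset.prod_Icc_succ_top (by omega)]
  have hmem : ∀ m : ℕ,
      r / R m < (D (m+1) : ℝ) / ((D (m+1) : ℝ) + 1 + 2 ^ (d * (m+1) - d)) := by
    intro m
    simpa using (hleast (m+1) (by omega)).1
  have hbase : ∀ n, r < R n ∧ R n ≤ 1 := by
    intro n
    induction n with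
    | zero => exact ⟨by rw [hR0]; exact hr1, le_of_eq hR0⟩
    | succ m ih =>
      have hRm : 0 < R m := hr0.trans ih.1
      have h1 : r < R m * ((D (m+1) : ℝ) / ((D (m+1) : ℝ) + 1 + 2 ^ (d * (m+1) - d))) := by
        have := hmem m
        rwa [div_lt_iff₀ hRm, mul_comm] at this
      have hf1 : (D (m+1) : ℝ) / ((D (m+1) : ℝ) + 1 + 2 ^ (d * (m+1) - d)) ≤ 1 := by
        apply div_le_one_of_le₀ _ (hdenom (m+1)).le
        have := hE1 (m+1); linarith
      have hf0 : (0:ℝ) ≤ (D (m+1) : ℝ) / ((D (m+1) : ℝ) + 1 + 2 ^ (d * (m+1) - d)) :=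
        div_nonneg (Nat.cast_nonneg _) (hdenom (m+1)).le
      refine ⟨by rw [hRrec m]; exact h1, ?_⟩
      rw [hRrec m]
      calc R m * ((D (m+1) : ℝ) / ((D (m+1) : ℝ) + 1 + 2 ^ (d * (m+1) - d)))
          ≤ 1 * 1 := mul_le_mul ih.2 hf1 hf0 zero_le_one
        _ = 1 := one_mul 1
  -- key quantitative bound
  have hkey : ∀ m : ℕ, R (m+1) ≤ r + (1/2:ℝ)^m := by
    intro m
    set k : ℝ := (D (m+1) : ℝ) with hkdef
    set E : ℝ := (2:ℝ) ^ (d * (m+1) - d) with hEdef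
    have hE : (1:ℝ) ≤ E := hE1 (m+1)
    have hEm : (2:ℝ)^m ≤ E := by
      rw [hEdef]
      apply pow_le_pow_right₀ one_le_two
      have h1 : d*(m+1)-d = d*m := by rw [Nat.mul_succ, Nat.add_sub_cancel]
      rw [h1]; exact Nat.le_mul_of_pos_left m hd
    have hRm := hbase m
    have hRmpos : 0 < R m := hr0.trans hRm.1
    have hk1 : 1 ≤ D (m+1) := by
      by_contra h
      have h0 : D (m+1) = 0 := by omega
      have h2 := hmem m
      rw [h0] at h2
      simp only [Nat.cast_zero, zero_div] at h2
      have : 0 < r / R m := div_pos hr0 hRmpos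
      linarith
    have hkr : (1:ℝ) ≤ k := by rw [hkdef]; exact_mod_cast hk1
    have hnotmem : ¬ (r / R ((m+1) - 1) <
        ((D (m+1) - 1 : ℕ) : ℝ) / (((D (m+1) - 1 : ℕ) : ℝ) + 1 + 2 ^ (d * (m+1) - d))) := by
      intro hcon
      have := (hleast (m+1) (by omega)).2 hcon
      omega
    push_neg at hnotmem
    have hcast : ((D (m+1) - 1 : ℕ) : ℝ) = k - 1 := by
      rw [hkdef]; push_cast [hk1]; ring
    rw [hcast, Nat.add_sub_cancel] at hnotmem
    have hkE : (0:ℝ) < k + E := by linarith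
    have hkE1 : (0:ℝ) < k + 1 + E := by linarith
    have hmin' : (k - 1) / (k + E) ≤ r / R m := by
      have : k - 1 + 1 + E = k + E := by ring
      rwa [this] at hnotmem
    have h3 : (k - 1) / (k + E) * R m ≤ r := (le_div_iff₀ hRmpos).mp hmin'
    have hdiff : k/(k+1+E) - (k-1)/(k+E) ≤ 1/E := by
      rw [div_sub_div _ _ hkE1.ne' hkE.ne',
        div_le_div_iff₀ (by positivity) (by linarith : (0:ℝ) < E)]
      nlinarith
    have hdiff0 : 0 ≤ k/(k+1+E) - (k-1)/(k+E) := by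
      rw [sub_nonneg, div_le_div_iff₀ hkE hkE1]
      nlinarith
    have h5 : (1:ℝ)/E ≤ (1/2:ℝ)^m := by
      rw [one_div_pow]
      exact one_div_le_one_div_of_le (by positivity) hEm
    have h6 : R m * (k/(k+1+E) - (k-1)/(k+E)) ≤ 1 * (1/E) :=
      mul_le_mul hRm.2 hdiff hdiff0 zero_le_one
    have h4 : R (m+1) = R m * (k/(k+1+E)) := hRrec m
    calc R (m+1) = (k - 1) / (k + E) * R m
          + R m * (k/(k+1+E) - (k-1)/(k+E)) := by rw [h4]; ring
      _ ≤ r + 1 * (1/E) := add_le_add h3 h6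
      _ ≤ r + (1/2:ℝ)^m := by rw [one_mul]; linarith
  have hupper : Tendsto (fun n : ℕ => r + (1/2:ℝ)^(n-1)) atTop (nhds r) := by
    have h0 : Tendsto (fun n : ℕ => ((1/2:ℝ))^(n-1)) atTop (nhds 0) :=
      (tendsto_pow_atTop_nhds_zero_of_lt_one (by norm_num) (by norm_num)).comp
        (tendsto_sub_atTop_nat 1)
    simpa using tendsto_const_nhds.add h0
  have hRtend : Tendsto R atTop (nhds r) := by
    apply tendsto_of_tendsto_of_tendsto_of_le_of_le'
      (tendsto_const_nhds : Tendsto (fun _ : ℕ => r) atTop (nhds r)) hupper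
    · exact Eventually.of_forall fun n => (hbase n).1.le
    · filter_upwards [eventually_ge_atTop 1] with n hn
      obtain ⟨m, rfl⟩ := Nat.exists_eq_add_of_le hn
      simpa [Nat.add_comm, Nat.add_sub_cancel] using hkey m
  refine ⟨hRtend, hRtend.congr' ?_⟩
  filter_upwards [eventually_ge_atTop 1] with n hn
  exact hRprod n hn
end

section
/- Let 0 < r' ≤ r < 1 and d ∈ ℕ with d ≥ 1. Then there exist sequences (d(n)) and (d'(n)) of positive natural numbers such that: (a) d(n) is nondecreasing with lim d(n) = ∞; (b) ∏_{n=1}^∞ d(n)/(d(n)+1+2^(dn−d)) = r; (c) d'(n) ≤ d(n) for all n; and (d) ∏_{n=1}^∞ d'(n)/(d(n)+1+2^(dn−d)) = r'. -/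
open Filter Topology

noncomputable def PD (r : ℝ) (d : ℕ) : ℕ → ℕ × ℝ
  | 0 => (1, 1)
  | n + 1 =>
    let m : ℕ := ⌊r * (1 + 2 ^ (d * (n + 1) - d)) / ((PD r d n).2 - r)⌋₊ + 1
    (m, (PD r d n).2 * ((m : ℝ) / ((m : ℝ) + 1 + 2 ^ (d * (n + 1) - d))))

noncomputable def QD (r' r : ℝ) (d : ℕ) : ℕ → ℕ × ℝ
  | 0 => (1, 1)
  | n + 1 =>
    let m : ℕ := max 1 ⌈r' / r * (PD r d n).2 * ((PD r d (n + 1)).1 : ℝ) / (QD r' r d n).2⌉₊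
    (m, (QD r' r d n).2 * ((m : ℝ) / (((PD r d (n + 1)).1 : ℝ) + 1 + 2 ^ (d * (n + 1) - d))))

lemma QD_fst_succ (r' r : ℝ) (d n : ℕ) :
    (QD r' r d (n + 1)).1
      = max 1 ⌈r' / r * (PD r d n).2 * ((PD r d (n + 1)).1 : ℝ) / (QD r' r d n).2⌉₊ := rfl

lemma QD_snd_succ (r' r : ℝ) (d n : ℕ) :
    (QD r' r d (n + 1)).2 = (QD r' r d n).2 * (((QD r' r d (n + 1)).1 : ℝ) /
      (((PD r d (n + 1)).1 : ℝ) + 1 + 2 ^ (d * (n + 1) - d))) := rfl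

lemma PD_fst_succ (r : ℝ) (d n : ℕ) :
    (PD r d (n + 1)).1 = ⌊r * (1 + 2 ^ (d * (n + 1) - d)) / ((PD r d n).2 - r)⌋₊ + 1 := rfl

lemma PD_snd_succ (r : ℝ) (d n : ℕ) :
    (PD r d (n + 1)).2 = (PD r d n).2 * (((PD r d (n + 1)).1 : ℝ) /
      (((PD r d (n + 1)).1 : ℝ) + 1 + 2 ^ (d * (n + 1) - d))) := rfl

section
variable {r : ℝ} {d : ℕ}

lemma c_pos (d k : ℕ) : (0:ℝ) < 2 ^ (d * k - d) := by positivity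

lemma key_P (h0 : 0 < r) (h2 : r < 1) : ∀ n, r < (PD r d n).2 ∧ (PD r d n).2 ≤ 1 := by
  intro n
  induction n with
  | zero => exact ⟨h2, le_refl _⟩
  | succ n ih =>
    obtain ⟨hP, hP1⟩ := ih
    set P := (PD r d n).2 with hPdef
    set c : ℝ := 2 ^ (d * (n + 1) - d) with hc
    have hcpos : (0:ℝ) < c := c_pos d (n+1)
    have hPr : 0 < P - r := by linarith
    set T : ℝ := r * (1 + c) / (P - r) with hT
    have hTnn : 0 ≤ T := by positivity
    have hm : (PD r d (n+1)).1 = ⌊T⌋₊ + 1 := PD_fst_succ r d n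
    set m : ℕ := (PD r d (n+1)).1 with hmdef
    have hmT : T < (m : ℝ) := by
      rw [hm]; push_cast; exact Nat.lt_floor_add_one T
    have hw : (0:ℝ) < (m:ℝ) + 1 + c := by positivity
    have hineq : r * ((m:ℝ) + 1 + c) < P * (m:ℝ) := by
      have := (div_lt_iff₀ hPr).mp hmT
      nlinarith
    constructor
    · rw [PD_snd_succ, ← hmdef, ← hPdef, ← hc]
      have h' : r < P * (m:ℝ) / ((m:ℝ)+1+c) := (lt_div_iff₀ hw).mpr (by linarith)
      rwa [mul_div_assoc] at h'
    · rw [PD_snd_succ, ← hmdef, ← hPdef, ← hc]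
      have hle : (m:ℝ) / ((m:ℝ)+1+c) ≤ 1 := by
        rw [div_le_one hw]; linarith
      have hP0 : 0 ≤ P := by linarith
      calc P * ((m:ℝ) / ((m:ℝ)+1+c)) ≤ P * 1 := by
            apply mul_le_mul_of_nonneg_left hle hP0
        _ = P := mul_one P
        _ ≤ 1 := hP1
lemma P_pos (h0 : 0 < r) (h2 : r < 1) (n : ℕ) : 0 < (PD r d n).2 :=
  lt_trans h0 (key_P h0 h2 n).1

lemma D_pos : ∀ n, 1 ≤ (PD r d n).1
  | 0 => le_refl 1
  | n + 1 => by rw [PD_fst_succ]; omega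

lemma P_antitone (h0 : 0 < r) (h2 : r < 1) (n : ℕ) :
    (PD r d (n+1)).2 ≤ (PD r d n).2 := by
  rw [PD_snd_succ]
  set m : ℕ := (PD r d (n+1)).1
  have hcpos : (0:ℝ) < 2 ^ (d * (n + 1) - d) := c_pos d (n+1)
  have hw : (0:ℝ) < (m:ℝ) + 1 + 2 ^ (d * (n + 1) - d) := by positivity
  have hle : (m:ℝ) / ((m:ℝ) + 1 + 2 ^ (d * (n + 1) - d)) ≤ 1 := by
    rw [div_le_one hw]; linarith
  nlinarith [P_pos (d := d) h0 h2 n]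

lemma P_antitone' (h0 : 0 < r) (h2 : r < 1) : Antitone (fun n => (PD r d n).2) :=
  antitone_nat_of_succ_le (P_antitone h0 h2)

lemma D_mono (h0 : 0 < r) (h2 : r < 1) : Monotone (fun n => (PD r d n).1) := by
  apply monotone_nat_of_le_succ
  intro n
  match n with
  | 0 => exact D_pos 1
  | k + 1 =>
    rw [PD_fst_succ, PD_fst_succ]
    have hfl : ⌊r * (1 + 2 ^ (d * (k + 1) - d)) / ((PD r d k).2 - r)⌋₊
        ≤ ⌊r * (1 + 2 ^ (d * (k + 1 + 1) - d)) / ((PD r d (k+1)).2 - r)⌋₊ := by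
      apply Nat.floor_le_floor
      have h1 : 0 < (PD r d (k+1)).2 - r := by linarith [(key_P (d := d) h0 h2 (k+1)).1]
      have h2' : (PD r d (k+1)).2 - r ≤ (PD r d k).2 - r := by
        linarith [P_antitone (d := d) h0 h2 k]
      have hc : (2:ℝ) ^ (d * (k + 1) - d) ≤ 2 ^ (d * (k + 1 + 1) - d) := by
        apply pow_le_pow_right₀ one_le_two
        exact Nat.sub_le_sub_right (Nat.mul_le_mul_left d (Nat.le_succ (k+1))) d
      have hnum : r * (1 + 2 ^ (d * (k + 1) - d)) ≤ r * (1 + 2 ^ (d * (k + 1 + 1) - d)) := by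
        nlinarith
      have hnn : 0 ≤ r * (1 + 2 ^ (d * (k + 1 + 1) - d)) := by positivity
      exact div_le_div₀ hnn hnum h1 h2'
    omega

/-- minimality / binding bound -/
lemma P_upper (h0 : 0 < r) (h2 : r < 1) (n : ℕ) :
    (PD r d (n+1)).2 * (((PD r d (n+1)).1 : ℝ) - 1) ≤ r * ((PD r d (n+1)).1 : ℝ) := by
  obtain ⟨hP, hP1⟩ := key_P (d := d) h0 h2 n
  set P := (PD r d n).2 with hPdef
  set c : ℝ := 2 ^ (d * (n + 1) - d) with hc
  have hcpos : (0:ℝ) < c := c_pos d (n+1)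
  have hPr : 0 < P - r := by linarith
  set T : ℝ := r * (1 + c) / (P - r) with hT
  have hTnn : 0 ≤ T := by positivity
  have hm : (PD r d (n+1)).1 = ⌊T⌋₊ + 1 := PD_fst_succ r d n
  set m : ℕ := (PD r d (n+1)).1 with hmdef
  have hfloor : ((⌊T⌋₊ : ℝ)) ≤ T := Nat.floor_le hTnn
  have hm1 : ((m:ℝ) - 1) ≤ T := by rw [hm]; push_cast; linarith
  -- (m-1)(P-r) ≤ r(1+c), so P(m-1) ≤ r(m+c)
  have h1 : ((m:ℝ) - 1) * (P - r) ≤ r * (1 + c) := by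
    rw [hT] at hm1
    exact (le_div_iff₀ hPr).mp hm1
  have hPm1 : P * ((m:ℝ) - 1) ≤ r * ((m:ℝ) + c) := by nlinarith
  have hw : (0:ℝ) < (m:ℝ) + 1 + c := by positivity
  rw [PD_snd_succ, ← hmdef, ← hPdef, ← hc]
  have hm1nn : (0:ℝ) ≤ (m:ℝ) - 1 := by
    have := D_pos (r := r) (d := d) (n+1)
    rw [← hmdef] at this
    have : (1:ℝ) ≤ (m:ℝ) := by exact_mod_cast this
    linarith
  have hP0 : 0 < P := lt_trans h0 hP
  have hEq : P * ((m:ℝ) / ((m:ℝ)+1+c)) * ((m:ℝ) - 1)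
      = P * (m:ℝ) * ((m:ℝ)-1) / ((m:ℝ)+1+c) := by ring
  rw [hEq, div_le_iff₀ hw]
  have hmnn : (0:ℝ) ≤ (m:ℝ) := by positivity
  nlinarith [mul_le_mul_of_nonneg_left hPm1 hmnn]

lemma D_lb (h0 : 0 < r) (h2 : r < 1) (hd : 1 ≤ d) (n : ℕ) :
    r * 2 ^ n ≤ ((PD r d (n+1)).1 : ℝ) := by
  obtain ⟨hP, hP1⟩ := key_P (d := d) h0 h2 n
  set P := (PD r d n).2 with hPdef
  set c : ℝ := 2 ^ (d * (n + 1) - d) with hc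
  have hcpos : (0:ℝ) < c := c_pos d (n+1)
  have hPr : 0 < P - r := by linarith
  set T : ℝ := r * (1 + c) / (P - r) with hT
  have hmT : T < ((PD r d (n+1)).1 : ℝ) := by
    rw [PD_fst_succ]; push_cast; exact Nat.lt_floor_add_one T
  have hc2 : (2:ℝ) ^ n ≤ c := by
    rw [hc]
    apply pow_le_pow_right₀ one_le_two
    have e1 : n ≤ d * n := Nat.le_mul_of_pos_left n hd
    have e2 : d * (n + 1) = d * n + d := by ring
    omega
  have h2n : (0:ℝ) < 2 ^ n := by positivity
  have hT2 : r * 2 ^ n ≤ T := by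
    rw [hT, le_div_iff₀ hPr]
    calc r * 2 ^ n * (P - r) ≤ r * 2 ^ n * 1 :=
          mul_le_mul_of_nonneg_left (by linarith) (by positivity)
      _ ≤ r * c := by nlinarith
      _ ≤ r * (1 + c) := by nlinarith
  linarith

lemma D_tendsto (h0 : 0 < r) (h2 : r < 1) (hd : 1 ≤ d) :
    Tendsto (fun n => ((PD r d n).1 : ℝ)) atTop atTop := by
  rw [← tendsto_add_atTop_iff_nat 1]
  exact tendsto_atTop_mono (D_lb h0 h2 hd)
    (Tendsto.const_mul_atTop h0 (tendsto_pow_atTop_atTop_of_one_lt one_lt_two))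

lemma P_tendsto (h0 : 0 < r) (h2 : r < 1) (hd : 1 ≤ d) :
    Tendsto (fun n => (PD r d n).2) atTop (nhds r) := by
  rw [Metric.tendsto_atTop]
  intro ε hε
  obtain ⟨N, hN⟩ := eventually_atTop.mp
    ((D_tendsto (d := d) h0 h2 hd).eventually_ge_atTop (r / ε + 2))
  refine ⟨N + 1, fun n hn => ?_⟩
  obtain ⟨k, rfl⟩ : ∃ k, n = k + 1 := ⟨n - 1, by omega⟩
  have hD : r / ε + 2 ≤ ((PD r d (k+1)).1 : ℝ) := hN (k+1) (by omega)
  set m : ℝ := ((PD r d (k+1)).1 : ℝ) with hm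
  set P := (PD r d (k+1)).2 with hP
  have h1 : P * (m - 1) ≤ r * m := P_upper h0 h2 k
  have h2' : r < P := (key_P (d := d) h0 h2 (k+1)).1
  have hm1 : 0 < m - 1 := by
    have : (0:ℝ) ≤ r / ε := by positivity
    linarith
  -- P ≤ r + r/(m-1) < r + ε
  have h3 : P - r ≤ r / (m - 1) := by
    rw [le_div_iff₀ hm1]
    nlinarith
  have h4 : r / (m - 1) < ε := by
    rw [div_lt_iff₀ hm1]
    have : r / ε < r / ε + 1 := by linarith
    calc r = ε * (r / ε) := by field_simp
      _ < ε * (m - 1) := by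
          apply mul_lt_mul_of_pos_left ?_ hε
          linarith
  rw [Real.dist_eq, abs_of_pos (by linarith)]
  linarith

lemma QD_pos (r' r : ℝ) (d : ℕ) : ∀ n, 1 ≤ (QD r' r d n).1
  | 0 => le_refl 1
  | n + 1 => by rw [QD_fst_succ]; exact le_max_left _ _

lemma key_Q (h0 : 0 < r') (h1 : r' ≤ r) (h2 : r < 1) : ∀ n,
    r' / r * (PD r d n).2 ≤ (QD r' r d n).2 ∧ (QD r' r d n).2 ≤ 1 ∧
      (QD r' r d n).1 ≤ (PD r d n).1 := by
  have hr : 0 < r := lt_of_lt_of_le h0 h1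
  intro n
  induction n with
  | zero =>
    refine ⟨?_, le_refl _, le_refl _⟩
    show r' / r * 1 ≤ 1
    rw [mul_one]
    exact div_le_one_of_le₀ h1 hr.le
  | succ n ih =>
    obtain ⟨ihQ, ihQ1, _⟩ := ih
    set P := (PD r d n).2 with hPdef
    set Q := (QD r' r d n).2 with hQdef
    have hPpos : 0 < P := P_pos hr h2 n
    have hQpos : 0 < Q := lt_of_lt_of_le (by positivity) ihQ
    set c : ℝ := 2 ^ (d * (n + 1) - d) with hc
    have hcpos : (0:ℝ) < c := c_pos d (n+1)
    set Dn1 : ℕ := (PD r d (n+1)).1 with hDn1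
    have hD1 : 1 ≤ Dn1 := D_pos (n+1)
    have hD1R : (1:ℝ) ≤ (Dn1:ℝ) := by exact_mod_cast hD1
    set w : ℝ := (Dn1:ℝ) + 1 + c with hw
    have hwpos : 0 < w := by positivity
    set S : ℝ := r' / r * P * (Dn1:ℝ) / Q with hS
    have hSnn : 0 ≤ S := by positivity
    have hm : (QD r' r d (n+1)).1 = max 1 ⌈S⌉₊ := QD_fst_succ r' r d n
    set m : ℕ := (QD r' r d (n+1)).1 with hmdef
    have hQS : Q * S = r' / r * P * (Dn1:ℝ) := by
      rw [hS]; field_simp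
    have hmS : S ≤ (m:ℝ) := by
      rw [hm]
      calc S ≤ (⌈S⌉₊:ℝ) := Nat.le_ceil S
        _ ≤ ((max 1 ⌈S⌉₊ : ℕ):ℝ) := by exact_mod_cast le_max_right 1 ⌈S⌉₊
    have hmD : m ≤ Dn1 := by
      rw [hm]
      apply max_le hD1
      rw [Nat.ceil_le, hS, div_le_iff₀ hQpos]
      nlinarith [ihQ]
    have hmDR : (m:ℝ) ≤ (Dn1:ℝ) := by exact_mod_cast hmD
    have hPsucc : (PD r d (n+1)).2 = P * ((Dn1:ℝ) / w) := by
      rw [PD_snd_succ, ← hPdef, ← hDn1, ← hc, ← hw]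
    have hQsucc : (QD r' r d (n+1)).2 = Q * ((m:ℝ) / w) := by
      rw [QD_snd_succ, ← hQdef, ← hmdef, ← hDn1, ← hc, ← hw]
    refine ⟨?_, ?_, hmD⟩
    · rw [hPsucc, hQsucc]
      have step : r' / r * P * (Dn1:ℝ) ≤ Q * (m:ℝ) := by
        rw [← hQS]
        exact mul_le_mul_of_nonneg_left hmS hQpos.le
      calc r' / r * (P * ((Dn1:ℝ) / w)) = (r' / r * P * (Dn1:ℝ)) / w := by ring
        _ ≤ (Q * (m:ℝ)) / w := by gcongr
        _ = Q * ((m:ℝ) / w) := by ring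
    · rw [hQsucc]
      have hle : (m:ℝ) / w ≤ 1 := by
        rw [div_le_one hwpos]; linarith
      nlinarith

lemma Q_upper (h0 : 0 < r') (h1 : r' ≤ r) (h2 : r < 1) (hd : 1 ≤ d) (n : ℕ) :
    (QD r' r d (n+1)).2 ≤ r' / r * (PD r d (n+1)).2 + (1/2) ^ n := by
  have hr : 0 < r := lt_of_lt_of_le h0 h1
  obtain ⟨ihQ, ihQ1, _⟩ := key_Q (d := d) h0 h1 h2 n
  set P := (PD r d n).2 with hPdef
  set Q := (QD r' r d n).2 with hQdef
  have hPpos : 0 < P := P_pos hr h2 n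
  have hQpos : 0 < Q := lt_of_lt_of_le (by positivity) ihQ
  set c : ℝ := 2 ^ (d * (n + 1) - d) with hc
  have hcpos : (0:ℝ) < c := c_pos d (n+1)
  set Dn1 : ℕ := (PD r d (n+1)).1 with hDn1
  have hD1R : (1:ℝ) ≤ (Dn1:ℝ) := by exact_mod_cast D_pos (r := r) (d := d) (n+1)
  set w : ℝ := (Dn1:ℝ) + 1 + c with hw
  have hwpos : 0 < w := by positivity
  set S : ℝ := r' / r * P * (Dn1:ℝ) / Q with hS
  have hSnn : 0 ≤ S := by positivity
  have hm : (QD r' r d (n+1)).1 = max 1 ⌈S⌉₊ := QD_fst_succ r' r d n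
  set m : ℕ := (QD r' r d (n+1)).1 with hmdef
  have hQS : Q * S = r' / r * P * (Dn1:ℝ) := by
    rw [hS]; field_simp
  have hmS : (m:ℝ) ≤ S + 1 := by
    rw [hm, Nat.cast_max]
    apply max_le (by push_cast; linarith)
    linarith [Nat.ceil_lt_add_one hSnn]
  have hPsucc : (PD r d (n+1)).2 = P * ((Dn1:ℝ) / w) := by
    rw [PD_snd_succ, ← hPdef, ← hDn1, ← hc, ← hw]
  have hQsucc : (QD r' r d (n+1)).2 = Q * ((m:ℝ) / w) := by
    rw [QD_snd_succ, ← hQdef, ← hmdef, ← hDn1, ← hc, ← hw]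
  have hc2 : (2:ℝ) ^ n ≤ c := by
    rw [hc]
    apply pow_le_pow_right₀ one_le_two
    have e1 : n ≤ d * n := Nat.le_mul_of_pos_left n hd
    have e2 : d * (n + 1) = d * n + d := by ring
    omega
  have hwc : (2:ℝ) ^ n ≤ w := by rw [hw]; linarith
  have h2n : (0:ℝ) < 2 ^ n := by positivity
  have hinv : 1 / w ≤ (1/2) ^ n := by
    rw [div_pow, one_pow]
    exact one_div_le_one_div_of_le h2n hwc
  have hQw : Q / w ≤ 1 / w := by gcongr
  calc (QD r' r d (n+1)).2 = Q * ((m:ℝ) / w) := hQsucc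
    _ ≤ Q * ((S + 1) / w) := by gcongr
    _ = (Q * S) / w + Q / w := by ring
    _ = (r' / r * P * (Dn1:ℝ)) / w + Q / w := by rw [hQS]
    _ = r' / r * (PD r d (n+1)).2 + Q / w := by rw [hPsucc]; ring
    _ ≤ r' / r * (PD r d (n+1)).2 + (1/2) ^ n := by
        have := hQw.trans hinv
        linarith

lemma Q_tendsto (h0 : 0 < r') (h1 : r' ≤ r) (h2 : r < 1) (hd : 1 ≤ d) :
    Tendsto (fun n => (QD r' r d n).2) atTop (nhds r') := by
  have hr : 0 < r := lt_of_lt_of_le h0 h1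
  have hlow : Tendsto (fun n => r' / r * (PD r d n).2) atTop (nhds r') := by
    have h := (P_tendsto (d := d) hr h2 hd).const_mul (r' / r)
    have e : r' / r * r = r' := div_mul_cancel₀ r' hr.ne'
    rwa [e] at h
  have hup : Tendsto (fun n => r' / r * (PD r d n).2 + 2 * (1/2) ^ n) atTop (nhds r') := by
    have hz : Tendsto (fun n : ℕ => (2:ℝ) * (1/2) ^ n) atTop (nhds 0) := by
      have := (tendsto_pow_atTop_nhds_zero_of_lt_one (by norm_num : (0:ℝ) ≤ 1/2)
        (by norm_num : (1/2:ℝ) < 1)).const_mul (2:ℝ)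
      simpa using this
    simpa using hlow.add hz
  apply tendsto_of_tendsto_of_tendsto_of_le_of_le' hlow hup
  · filter_upwards with n
    exact (key_Q (d := d) h0 h1 h2 n).1
  · filter_upwards [eventually_ge_atTop 1] with n hn
    obtain ⟨k, rfl⟩ : ∃ k, n = k + 1 := ⟨n - 1, by omega⟩
    have h := Q_upper (d := d) h0 h1 h2 hd k
    have e : (2:ℝ) * (1/2) ^ (k + 1) = (1/2) ^ k := by rw [pow_succ]; ring
    linarith

lemma P_prod : ∀ N, (PD r d N).2
    = ∏ n ∈ Finset.Icc 1 N, (((PD r d n).1 : ℝ) / (((PD r d n).1 : ℝ) + 1 + 2 ^ (d * n - d)))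
  | 0 => by simp [PD]
  | N + 1 => by
    rw [Finset.prod_Icc_succ_top (Nat.succ_le_succ (Nat.zero_le N)), ← P_prod N, PD_snd_succ]

lemma Q_prod : ∀ N, (QD r' r d N).2
    = ∏ n ∈ Finset.Icc 1 N,
        (((QD r' r d n).1 : ℝ) / (((PD r d n).1 : ℝ) + 1 + 2 ^ (d * n - d)))
  | 0 => by simp [QD]
  | N + 1 => by
    rw [Finset.prod_Icc_succ_top (Nat.succ_le_succ (Nat.zero_le N)), ← Q_prod N, QD_snd_succ]

end


/-- Lemma 2.4 of the paper: for `0 < r' ≤ r < 1` and `d ≥ 1` there exist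
sequences `(d(n))`, `(d'(n))` of positive natural numbers such that `d(n)` is nondecreasing
and tends to infinity, `∏_{n=1}^∞ d(n)/(d(n)+1+2^(dn−d)) = r`, `d'(n) ≤ d(n)` for all `n`,
and `∏_{n=1}^∞ d'(n)/(d(n)+1+2^(dn−d)) = r'`. -/
theorem seq_lem (r' r : ℝ) (h0 : 0 < r') (h1 : r' ≤ r) (h2 : r < 1) (d : ℕ) (hd : 1 ≤ d) :
    ∃ D D' : ℕ → ℕ,
      (∀ n, 0 < D n) ∧ (∀ n, 0 < D' n) ∧
      Monotone D ∧ Tendsto (fun n => (D n : ℝ)) atTop atTop ∧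
      Tendsto (fun N => ∏ n ∈ Finset.Icc 1 N, (D n : ℝ) / ((D n : ℝ) + 1 + 2 ^ (d * n - d)))
        atTop (nhds r) ∧
      (∀ n, D' n ≤ D n) ∧
      Tendsto (fun N => ∏ n ∈ Finset.Icc 1 N, (D' n : ℝ) / ((D n : ℝ) + 1 + 2 ^ (d * n - d)))
        atTop (nhds r') := by
  have hr : 0 < r := lt_of_lt_of_le h0 h1
  refine ⟨fun n => (PD r d n).1, fun n => (QD r' r d n).1,
    fun n => D_pos n, fun n => QD_pos r' r d n, D_mono hr h2, D_tendsto hr h2 hd,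
    (P_tendsto hr h2 hd).congr (fun N => P_prod N),
    fun n => (key_Q h0 h1 h2 n).2.2,
    (Q_tendsto h0 h1 h2 hd).congr (fun N => Q_prod N)⟩
end

section
/- Let 0 < r' < r < 1, d ≥ 1, let (d(n)) be a sequence of positive naturals with ∏_{n=1}^∞ d(n)/(d(n)+1+2^(dn−d)) = r, and set ρ_n = ∏_{k=n+1}^∞ d(k)/(d(k)+1+2^(dk−d)). Then there exists a sequence (m(n)) of natural numbers with 1 ≤ m(n) ≤ d(n), m(n) divisible by nothing required, such that, setting γ_n = ∏_{k=1}^n m(k)/(d(k)+1+2^(dk−d)), one has γ_n ρ_n ≥ r' and γ_n ρ_n − r' < 1/(d(n)+1+2^(dn−d)) for all n. Consequently lim_{n→∞} γ_n = r'. -/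
open Filter Topology

/-- Auxiliary recursive definition of the γ sequence. -/
noncomputable def gammaAux (r' : ℝ) (ρ t : ℕ → ℝ) : ℕ → ℝ
  | 0 => 1
  | n + 1 => gammaAux r' ρ t n *
      ((sInf {j : ℕ | r' ≤ ((j : ℝ) + 1) * gammaAux r' ρ t n * ρ (n + 1) / t (n + 1)} : ℕ) + 1) /
      t (n + 1)

/-- Auxiliary definition of the m sequence. -/
noncomputable def mAux (r' : ℝ) (ρ t : ℕ → ℝ) (n : ℕ) : ℕ :=
  sInf {j : ℕ | r' ≤ ((j : ℝ) + 1) * gammaAux r' ρ t (n - 1) * ρ n / t n} + 1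

/-- for `0 < r' < r < 1`, `d ≥ 1`, a sequence `(d(n))` of positive naturals
with `∏_{n=1}^∞ d(n)/(d(n)+1+2^(dn−d)) = r` and tail products `ρ_n`, there is a sequence
`(m(n))` with `1 ≤ m(n) ≤ d(n)` such that, with
`γ_n = ∏_{k=1}^n m(k)/(d(k)+1+2^(dk−d))`, one has `γ_n ρ_n ≥ r'` and
`γ_n ρ_n − r' < 1/(d(n)+1+2^(dn−d))` for all `n ≥ 1`; consequently `γ_n → r'`. -/
theorem gamma_construction (d : ℕ) (hd : 1 ≤ d) (r' r : ℝ) (h0 : 0 < r') (h1 : r' < r)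
    (h2 : r < 1) (D : ℕ → ℕ) (hD : ∀ n, 0 < D n)
    (hprod : Tendsto (fun N => ∏ n ∈ Finset.Icc 1 N, (D n : ℝ) / ((D n : ℝ) + 1 + 2 ^ (d * n - d)))
      atTop (nhds r))
    (ρ : ℕ → ℝ)
    (hρ : ∀ n, Tendsto
      (fun N => ∏ k ∈ Finset.Icc (n + 1) N, (D k : ℝ) / ((D k : ℝ) + 1 + 2 ^ (d * k - d)))
      atTop (nhds (ρ n))) :
    ∃ m : ℕ → ℕ,
      (∀ n, 1 ≤ n → 1 ≤ m n ∧ m n ≤ D n) ∧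
      (∀ n, 1 ≤ n →
        r' ≤ (∏ k ∈ Finset.Icc 1 n, (m k : ℝ) / ((D k : ℝ) + 1 + 2 ^ (d * k - d))) * ρ n ∧
        (∏ k ∈ Finset.Icc 1 n, (m k : ℝ) / ((D k : ℝ) + 1 + 2 ^ (d * k - d))) * ρ n - r'
          < 1 / ((D n : ℝ) + 1 + 2 ^ (d * n - d))) ∧
      Tendsto (fun n => ∏ k ∈ Finset.Icc 1 n, (m k : ℝ) / ((D k : ℝ) + 1 + 2 ^ (d * k - d)))
        atTop (nhds r') := by
  classical
  -- abbreviate the denominators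
  let t : ℕ → ℝ := fun n => (D n : ℝ) + 1 + 2 ^ (d * n - d)
  have htdef : ∀ n, (D n : ℝ) + 1 + 2 ^ (d * n - d) = t n := fun _ => rfl
  simp only [htdef] at hprod hρ ⊢
  have htpos : ∀ n, 0 < t n := by
    intro n; show (0:ℝ) < (D n : ℝ) + 1 + 2 ^ (d * n - d); positivity
  have htge : ∀ n : ℕ, (n : ℝ) + 1 ≤ t n := by
    intro n
    have h2n : n ≤ 2 ^ (d * n - d) := by
      have hn1 : n - 1 < 2 ^ (n - 1) := Nat.lt_two_pow_self
      have hle : n - 1 ≤ d * n - d := by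
        have : 1 * (n - 1) ≤ d * (n - 1) := Nat.mul_le_mul_right _ hd
        have h' : d * (n - 1) = d * n - d := by
          rw [Nat.mul_sub, Nat.mul_one]
        omega
      have := Nat.pow_le_pow_right (by norm_num : 1 ≤ 2) hle
      omega
    have h2n' : (n : ℝ) ≤ 2 ^ (d * n - d) := by exact_mod_cast h2n
    have hD' : (0:ℝ) ≤ (D n : ℝ) := by positivity
    show (n : ℝ) + 1 ≤ (D n : ℝ) + 1 + 2 ^ (d * n - d)
    linarith
  -- the factors
  have hfpos : ∀ k, 0 < (D k : ℝ) / t k := fun k =>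
    div_pos (by exact_mod_cast hD k) (htpos k)
  have hfle1 : ∀ k, (D k : ℝ) / t k ≤ 1 := by
    intro k
    rw [div_le_one (htpos k)]
    show (D k : ℝ) ≤ (D k : ℝ) + 1 + 2 ^ (d * k - d)
    have h2p : (0:ℝ) < 2 ^ (d * k - d) := by positivity
    linarith
  -- partial products
  set P : ℕ → ℝ := fun n => ∏ k ∈ Finset.Icc 1 n, (D k : ℝ) / t k with hP
  have hPpos : ∀ n, 0 < P n := fun n => Finset.prod_pos (fun k _ => hfpos k)
  have hsplit : ∀ (f : ℕ → ℝ) (n N : ℕ), n ≤ N →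
      (∏ k ∈ Finset.Icc 1 n, f k) * (∏ k ∈ Finset.Icc (n+1) N, f k)
        = ∏ k ∈ Finset.Icc 1 N, f k := by
    intro f n N hnN
    have e1 : Finset.Icc 1 n = Finset.Ioc 0 n := by ext x; simp; omega
    have e2 : Finset.Icc (n+1) N = Finset.Ioc n N := by ext x; simp
    have e3 : Finset.Icc 1 N = Finset.Ioc 0 N := by ext x; simp; omega
    rw [e1, e2, e3, Finset.prod_Ioc_consecutive _ (Nat.zero_le n) hnN]
  have hPρ : ∀ n, P n * ρ n = r := by
    intro n
    have h1 : Tendsto (fun N => P n * ∏ k ∈ Finset.Icc (n+1) N, (D k : ℝ) / t k)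
        atTop (nhds (P n * ρ n)) := tendsto_const_nhds.mul (hρ n)
    have h2 : Tendsto (fun N => P n * ∏ k ∈ Finset.Icc (n+1) N, (D k : ℝ) / t k)
        atTop (nhds r) := by
      apply hprod.congr'
      filter_upwards [eventually_ge_atTop n] with N hN
      exact (hsplit _ n N hN).symm
    exact tendsto_nhds_unique h1 h2
  have hr : 0 < r := h0.trans h1
  have hρeq : ∀ n, ρ n = r / P n := by
    intro n
    field_simp [(hPpos n).ne']
    linarith [hPρ n]
  have hρpos : ∀ n, 0 < ρ n := fun n => (hρeq n) ▸ div_pos hr (hPpos n)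
  have hρle1 : ∀ n, ρ n ≤ 1 := by
    intro n
    refine le_of_tendsto (hρ n) ?_
    filter_upwards with N
    exact Finset.prod_le_one (fun k _ => (hfpos k).le) (fun k _ => hfle1 k)
  have hρrec : ∀ n, ρ n = (D (n+1) : ℝ) / t (n+1) * ρ (n+1) := by
    intro n
    have hPs : P (n+1) = P n * ((D (n+1) : ℝ) / t (n+1)) :=
      Finset.prod_Icc_succ_top (Nat.le_add_left 1 n) _
    have h' : P n * ρ n = P n * ((D (n+1) : ℝ) / t (n+1) * ρ (n+1)) := by
      rw [hPρ n, ← hPρ (n+1), hPs]; ring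
    exact mul_left_cancel₀ (hPpos n).ne' h'
  -- the sequences
  set Γ : ℕ → ℝ := gammaAux r' ρ t with hΓ
  set m : ℕ → ℕ := mAux r' ρ t with hm
  have hΓ0 : Γ 0 = 1 := rfl
  have hmdef : ∀ n, m (n+1) =
      sInf {j : ℕ | r' ≤ ((j : ℝ) + 1) * Γ n * ρ (n + 1) / t (n + 1)} + 1 := by
    intro n; simp [hm, mAux, hΓ]
  have hΓrec : ∀ n, Γ (n+1) = Γ n * (m (n+1) : ℝ) / t (n+1) := by
    intro n
    rw [hmdef n]
    show gammaAux r' ρ t (n+1) = _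
    rw [gammaAux]
    push_cast
    ring
  -- main invariant
  have main : ∀ n, 0 < Γ n ∧ r' ≤ Γ n * ρ n := by
    intro n
    induction n with
    | zero =>
      refine ⟨by rw [hΓ0]; norm_num, ?_⟩
      rw [hΓ0, one_mul, hρeq 0]
      have : P 0 = 1 := by simp [hP]
      rw [this, div_one]
      exact h1.le
    | succ n ih =>
      obtain ⟨hΓpos, hinv⟩ := ih
      set S := {j : ℕ | r' ≤ ((j : ℝ) + 1) * Γ n * ρ (n + 1) / t (n + 1)} with hS
      have hSne : S.Nonempty := by
        obtain ⟨j, hj⟩ := exists_nat_ge (r' * t (n+1) / (Γ n * ρ (n+1)))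
        refine ⟨j, ?_⟩
        have hc : 0 < Γ n * ρ (n+1) := mul_pos hΓpos (hρpos (n+1))
        have ht1 : 0 < t (n+1) := htpos (n+1)
        rw [Set.mem_setOf_eq, le_div_iff₀ ht1]
        rw [div_le_iff₀ hc] at hj
        nlinarith
      have hmem := Nat.sInf_mem hSne
      rw [Set.mem_setOf_eq] at hmem
      have hΓs : Γ (n+1) = Γ n * (((sInf S : ℕ) : ℝ) + 1) / t (n+1) := by
        rw [hΓrec n, hmdef n, ← hS]
        push_cast
        ring
      constructor
      · rw [hΓs]
        have : (0:ℝ) < ((sInf S : ℕ) : ℝ) + 1 := by positivity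
        positivity
      · rw [hΓs]
        calc r' ≤ (((sInf S : ℕ) : ℝ) + 1) * Γ n * ρ (n + 1) / t (n + 1) := hmem
          _ = Γ n * (((sInf S : ℕ) : ℝ) + 1) / t (n + 1) * ρ (n + 1) := by ring
  -- m bounds
  have hm1 : ∀ n, 1 ≤ m n := by
    intro n
    cases n with
    | zero => simp [hm, mAux]
    | succ k => rw [hmdef k]; omega
  have hmD : ∀ n, m (n+1) ≤ D (n+1) := by
    intro n
    rw [hmdef n]
    have hDmem : D (n+1) - 1 ∈ {j : ℕ | r' ≤ ((j : ℝ) + 1) * Γ n * ρ (n + 1) / t (n + 1)} := by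
      rw [Set.mem_setOf_eq]
      have hcast : ((D (n+1) - 1 : ℕ) : ℝ) + 1 = (D (n+1) : ℝ) := by
        have := hD (n+1)
        push_cast [Nat.cast_sub this]
        ring
      rw [hcast]
      calc r' ≤ Γ n * ρ n := (main n).2
        _ = (D (n+1) : ℝ) * Γ n * ρ (n+1) / t (n+1) := by
            rw [hρrec n]; ring
    have := Nat.sInf_le hDmem
    have := hD (n+1)
    omega
  have hΓle1 : ∀ n, Γ n ≤ 1 := by
    intro n
    induction n with
    | zero => rw [hΓ0]
    | succ n ih =>
      rw [hΓrec n]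
      have h1' : (m (n+1) : ℝ) ≤ t (n+1) := by
        have : (m (n+1) : ℝ) ≤ (D (n+1) : ℝ) := by exact_mod_cast hmD n
        have : (D (n+1) : ℝ) ≤ t (n+1) := by
          show (D (n+1) : ℝ) ≤ (D (n+1) : ℝ) + 1 + 2 ^ (d * (n+1) - d)
          have h2p : (0:ℝ) < 2 ^ (d * (n+1) - d) := by positivity
          linarith
        linarith
      have hΓpos := (main n).1
      have ht1 := htpos (n+1)
      rw [div_le_one ht1]
      calc Γ n * (m (n+1) : ℝ) ≤ 1 * t (n+1) := by
            apply mul_le_mul ih h1' (by positivity) (by norm_num)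
        _ = t (n+1) := one_mul _
  -- upper bound
  have hub : ∀ n, Γ (n+1) * ρ (n+1) - r' < 1 / t (n+1) := by
    intro n
    have hΓρ1 : Γ n * ρ (n+1) ≤ 1 :=
      mul_le_one₀ (hΓle1 n) (hρpos (n+1)).le (hρle1 (n+1))
    have hΓρ0 : 0 < Γ n * ρ (n+1) := mul_pos (main n).1 (hρpos (n+1))
    have ht1 := htpos (n+1)
    set S := {j : ℕ | r' ≤ ((j : ℝ) + 1) * Γ n * ρ (n + 1) / t (n + 1)} with hS
    have hΓs : Γ (n+1) = Γ n * (((sInf S : ℕ) : ℝ) + 1) / t (n+1) := by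
      rw [hΓrec n, hmdef n, ← hS]
      push_cast
      ring
    rcases Nat.eq_zero_or_pos (sInf S) with h | h
    · rw [hΓs, h]
      push_cast
      rw [sub_lt_iff_lt_add]
      have : Γ n * (0 + 1) / t (n+1) * ρ (n+1) = Γ n * ρ (n+1) / t (n+1) := by ring
      rw [this]
      have : Γ n * ρ (n+1) / t (n+1) ≤ 1 / t (n+1) := by gcongr
      linarith
    · have hnot : sInf S - 1 ∉ S := Nat.notMem_of_lt_sInf (by omega)
      rw [hS, Set.mem_setOf_eq, not_le] at hnot
      have hcast : ((sInf S - 1 : ℕ) : ℝ) + 1 = ((sInf S : ℕ) : ℝ) := by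
        push_cast [Nat.cast_sub h]
        ring
      rw [hcast] at hnot
      rw [hΓs]
      have key : Γ n * (((sInf S : ℕ) : ℝ) + 1) / t (n+1) * ρ (n+1)
          = ((sInf S : ℕ) : ℝ) * Γ n * ρ (n+1) / t (n+1) + Γ n * ρ (n+1) / t (n+1) := by ring
      rw [key]
      have h2' : Γ n * ρ (n+1) / t (n+1) ≤ 1 / t (n+1) := by gcongr
      linarith
  -- product formula
  have hΓprod : ∀ n, (∏ k ∈ Finset.Icc 1 n, (m k : ℝ) / t k) = Γ n := by
    intro n
    induction n with
    | zero => simp [hΓ0]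
    | succ n ih =>
      rw [Finset.prod_Icc_succ_top (Nat.le_add_left 1 n), ih, hΓrec n]
      ring
  -- convergence
  have htinv : Tendsto (fun n => 1 / t n) atTop (nhds 0) := by
    simp only [one_div]
    apply Tendsto.inv_tendsto_atTop
    apply tendsto_atTop_mono (fun n => htge n)
    exact tendsto_atTop_add_const_right _ 1 tendsto_natCast_atTop_atTop
  have hΓρtend : Tendsto (fun n => Γ n * ρ n) atTop (nhds r') := by
    have hupper : Tendsto (fun n => r' + 1 / t n) atTop (nhds r') := by
      have := (tendsto_const_nhds : Tendsto (fun _ : ℕ => r') atTop (nhds r')).add htinv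
      simpa using this
    refine tendsto_of_tendsto_of_tendsto_of_le_of_le' tendsto_const_nhds hupper ?_ ?_
    · filter_upwards with n; exact (main n).2
    · filter_upwards [eventually_ge_atTop 1] with n hn
      obtain ⟨k, rfl⟩ := Nat.exists_eq_add_of_le hn
      have := hub k
      rw [show 1 + k = k + 1 by omega] at *
      linarith [hub k]
  have hρtend : Tendsto ρ atTop (nhds 1) := by
    have : Tendsto (fun n => r / P n) atTop (nhds (r / r)) :=
      tendsto_const_nhds.div hprod hr.ne'
    rw [div_self hr.ne'] at this
    apply this.congr
    intro n
    exact (hρeq n).symm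
  have hΓtend : Tendsto Γ atTop (nhds r') := by
    have : Tendsto (fun n => (Γ n * ρ n) / ρ n) atTop (nhds (r' / 1)) :=
      hΓρtend.div hρtend one_ne_zero
    rw [div_one] at this
    apply this.congr
    intro n
    rw [mul_div_assoc, div_self (hρpos n).ne', mul_one]
  -- conclusion
  refine ⟨m, ?_, ?_, ?_⟩
  · intro n hn
    obtain ⟨k, rfl⟩ := Nat.exists_eq_add_of_le hn
    rw [show 1 + k = k + 1 by omega]
    exact ⟨hm1 _, hmD k⟩
  · intro n hn
    rw [hΓprod n]
    obtain ⟨k, rfl⟩ := Nat.exists_eq_add_of_le hn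
    rw [show 1 + k = k + 1 by omega]
    exact ⟨(main (k+1)).2, hub k⟩
  · exact (funext hΓprod : _) ▸ hΓtend
end
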